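/- arXiv:2304.04939 — 5 statements merged into one kernel-verified Lean document; each statement's English description precedes it below -/
import Mathlib

section
/- Let $\Delta \succ 0$ be a diagonal positive definite matrix and $L$ the Laplacian of a connected graph with incidence matrix $B$. Then $\lim_{\mathfrak{g} \to \infty} B^{\mathsf{T}} (\Delta + \mathfrak{g} L)^{-1} v = 0$ for every fixed vector $v$. -/
open Matrix Filter

private lemma quad_diag {m : ℕ} (w y : Fin m → ℝ) :
    y ⬝ᵥ (Matrix.diagonal w).mulVec y = ∑ e, w e * y e ^ 2 := by
  simp only [dotProduct, Matrix.mulVec_diagonal]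
  exact Finset.sum_congr rfl fun e _ => by ring

private lemma quad_L {n m : ℕ} (B : Matrix (Fin n) (Fin m) ℝ) (w : Fin m → ℝ)
    (x : Fin n → ℝ) :
    x ⬝ᵥ (B * Matrix.diagonal w * Bᵀ).mulVec x
      = ∑ e, w e * (Bᵀ.mulVec x e) ^ 2 := by
  have h : (B * Matrix.diagonal w * Bᵀ).mulVec x
      = B.mulVec ((Matrix.diagonal w).mulVec (Bᵀ.mulVec x)) := by
    rw [Matrix.mulVec_mulVec, Matrix.mulVec_mulVec]
  rw [h, Matrix.dotProduct_mulVec, ← Matrix.mulVec_transpose, quad_diag]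

theorem stmt8 {n m : ℕ}
    (B : Matrix (Fin n) (Fin m) ℝ) (w : Fin m → ℝ) (hw : ∀ e, 0 < w e)
    (L : Matrix (Fin n) (Fin n) ℝ) (hLdef : L = B * Matrix.diagonal w * Bᵀ)
    (hker : ∀ x : Fin n → ℝ, L.mulVec x = 0 ↔ ∃ c : ℝ, x = fun _ => c)
    (d : Fin n → ℝ) (hd : ∀ i, 0 < d i) (v : Fin n → ℝ) :
    Tendsto (fun g : ℝ =>
        Bᵀ.mulVec ((Matrix.diagonal d + g • L)⁻¹.mulVec v))
      atTop (nhds 0) := by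
  classical
  rcases Nat.eq_zero_or_pos m with hm | hm
  · subst hm
    have h0 : (fun g : ℝ =>
        Bᵀ.mulVec ((Matrix.diagonal d + g • L)⁻¹.mulVec v)) = fun _ => 0 := by
      funext g; funext e; exact e.elim0
    rw [h0]; exact tendsto_const_nhds
  rcases Nat.eq_zero_or_pos n with hn | hn
  · subst hn
    have h0 : (fun g : ℝ =>
        Bᵀ.mulVec ((Matrix.diagonal d + g • L)⁻¹.mulVec v)) = fun _ => 0 := by
      funext g; funext e; simp [Matrix.mulVec, dotProduct]
    rw [h0]; exact tendsto_const_nhds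
  have hne : (Finset.univ : Finset (Fin n)).Nonempty := ⟨⟨0, hn⟩, Finset.mem_univ _⟩
  have hme : (Finset.univ : Finset (Fin m)).Nonempty := ⟨⟨0, hm⟩, Finset.mem_univ _⟩
  set dmin := Finset.univ.inf' hne d with hdmin
  set wmin := Finset.univ.inf' hme w with hwmin
  have hdmin0 : 0 < dmin := (Finset.lt_inf'_iff hne).2 fun i _ => hd i
  have hwmin0 : 0 < wmin := (Finset.lt_inf'_iff hme).2 fun e _ => hw e
  set V := ∑ i, v i ^ 2 with hV
  have hV0 : 0 ≤ V := Finset.sum_nonneg fun i _ => sq_nonneg _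
  -- Hermitian facts
  have hLh : L.IsHermitian := by
    rw [hLdef, ← Matrix.conjTranspose_eq_transpose_of_trivial B]
    exact Matrix.isHermitian_mul_mul_conjTranspose B (Matrix.isHermitian_diagonal w)
  -- key bound
  have key : ∀ g : ℝ, 0 < g → ∀ e,
      (Bᵀ.mulVec ((Matrix.diagonal d + g • L)⁻¹.mulVec v) e) ^ 2
        ≤ V / (dmin * wmin) / g := by
    intro g hg e
    set M := Matrix.diagonal d + g • L with hM
    -- quadratic form identity
    have hquad : ∀ y : Fin n → ℝ,
        y ⬝ᵥ M.mulVec y = (∑ i, d i * y i ^ 2)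
          + g * ∑ e, w e * (Bᵀ.mulVec y e) ^ 2 := by
      intro y
      rw [hM, Matrix.add_mulVec, dotProduct_add, Matrix.smul_mulVec,
        dotProduct_smul, quad_diag, hLdef, quad_L]
      simp [smul_eq_mul]
    have hMpos : M.PosDef := by
      rw [Matrix.posDef_iff_dotProduct_mulVec]
      constructor
      · have : (g • L).IsHermitian := by
          have hLt : Lᵀ = L := by
            rw [← Matrix.conjTranspose_eq_transpose_of_trivial, hLh.eq]
          simp [Matrix.IsHermitian, Matrix.conjTranspose_smul, hLt]
        exact (Matrix.isHermitian_diagonal d).add this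
      · intro y hy
        have hy' : ∃ j, y j ≠ 0 := Function.ne_iff.1 hy
        obtain ⟨j, hj⟩ := hy'
        have h1 : 0 < ∑ i, d i * y i ^ 2 := by
          refine Finset.sum_pos' (fun i _ => mul_nonneg (hd i).le (sq_nonneg _)) ?_
          exact ⟨j, Finset.mem_univ _, mul_pos (hd j) (by positivity)⟩
        have h2 : 0 ≤ g * ∑ e, w e * (Bᵀ.mulVec y e) ^ 2 :=
          mul_nonneg hg.le (Finset.sum_nonneg fun e _ =>
            mul_nonneg (hw e).le (sq_nonneg _))
        have : star y ⬝ᵥ M.mulVec y = y ⬝ᵥ M.mulVec y := by simp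
        rw [this, hquad y]
        linarith
    have hdet : IsUnit M.det := isUnit_iff_ne_zero.2 hMpos.det_pos.ne'
    set x := M⁻¹.mulVec v with hxdef
    have hx : M.mulVec x = v := by
      rw [hxdef, Matrix.mulVec_mulVec, Matrix.mul_nonsing_inv _ hdet,
        Matrix.one_mulVec]
    clear hxdef
    clear_value x
    set S := ∑ i, x i ^ 2 with hS
    set T := ∑ e, (Bᵀ.mulVec x e) ^ 2 with hT
    have hS0 : 0 ≤ S := Finset.sum_nonneg fun i _ => sq_nonneg _
    have hT0 : 0 ≤ T := Finset.sum_nonneg fun e _ => sq_nonneg _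
    have h1 : x ⬝ᵥ v = (∑ i, d i * x i ^ 2)
        + g * ∑ e, w e * (Bᵀ.mulVec x e) ^ 2 := by
      rw [← hx, hquad x]
    have h2 : dmin * S ≤ ∑ i, d i * x i ^ 2 := by
      rw [hS, Finset.mul_sum]
      exact Finset.sum_le_sum fun i _ =>
        mul_le_mul_of_nonneg_right (Finset.inf'_le _ (Finset.mem_univ i)) (sq_nonneg _)
    have h3 : wmin * T ≤ ∑ e, w e * (Bᵀ.mulVec x e) ^ 2 := by
      rw [hT, Finset.mul_sum]
      exact Finset.sum_le_sum fun e _ =>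
        mul_le_mul_of_nonneg_right (Finset.inf'_le _ (Finset.mem_univ e)) (sq_nonneg _)
    have hwT0 : 0 ≤ ∑ e, w e * (Bᵀ.mulVec x e) ^ 2 :=
      Finset.sum_nonneg fun e _ => mul_nonneg (hw e).le (sq_nonneg _)
    have hdS0 : 0 ≤ ∑ i, d i * x i ^ 2 :=
      Finset.sum_nonneg fun i _ => mul_nonneg (hd i).le (sq_nonneg _)
    have hxv0 : 0 ≤ x ⬝ᵥ v := by
      rw [h1]; have := mul_nonneg hg.le hwT0; linarith
    have hCS : (x ⬝ᵥ v) ^ 2 ≤ S * V := by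
      have := Finset.sum_mul_sq_le_sq_mul_sq Finset.univ x v
      simpa [dotProduct, hS, hV] using this
    -- dmin * S ≤ x ⬝ᵥ v
    have h4 : dmin * S ≤ x ⬝ᵥ v := by
      have := mul_nonneg hg.le hwT0
      calc dmin * S ≤ ∑ i, d i * x i ^ 2 := h2
        _ ≤ _ := by rw [h1]; linarith
    -- dmin^2 * S ≤ V
    have h5 : dmin ^ 2 * S ≤ V := by
      rcases eq_or_lt_of_le hS0 with h | h
      · rw [← h]; simpa using hV0
      · have hsq : (dmin * S) ^ 2 ≤ S * V :=
          le_trans (pow_le_pow_left₀ (mul_nonneg hdmin0.le hS0) h4 2) hCS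
        have h' : dmin ^ 2 * S * S ≤ V * S := by
          calc dmin ^ 2 * S * S = (dmin * S) ^ 2 := by ring
            _ ≤ S * V := hsq
            _ = V * S := by ring
        exact le_of_mul_le_mul_right h' h
    -- x ⬝ᵥ v ≤ V / dmin
    have h6 : x ⬝ᵥ v ≤ V / dmin := by
      have hsq : (x ⬝ᵥ v) ^ 2 ≤ (V / dmin) ^ 2 := by
        calc (x ⬝ᵥ v) ^ 2 ≤ S * V := hCS
          _ ≤ (V / dmin ^ 2) * V := by
              have : S ≤ V / dmin ^ 2 := by
                rw [le_div_iff₀ (pow_pos hdmin0 2)]; linarith [h5]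
              exact mul_le_mul_of_nonneg_right this hV0
          _ = (V / dmin) ^ 2 := by field_simp
      calc x ⬝ᵥ v = Real.sqrt ((x ⬝ᵥ v) ^ 2) := (Real.sqrt_sq hxv0).symm
        _ ≤ Real.sqrt ((V / dmin) ^ 2) := Real.sqrt_le_sqrt hsq
        _ = V / dmin := Real.sqrt_sq (div_nonneg hV0 hdmin0.le)
    -- g * wmin * T ≤ V / dmin
    have h7 : g * (wmin * T) ≤ V / dmin := by
      have : g * (wmin * T) ≤ g * ∑ e, w e * (Bᵀ.mulVec x e) ^ 2 :=
        mul_le_mul_of_nonneg_left h3 hg.le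
      calc g * (wmin * T) ≤ g * ∑ e, w e * (Bᵀ.mulVec x e) ^ 2 := this
        _ ≤ x ⬝ᵥ v := by rw [h1]; linarith [hdS0]
        _ ≤ V / dmin := h6
    have h8 : T ≤ V / (dmin * wmin) / g := by
      rw [div_div, le_div_iff₀ (mul_pos (mul_pos hdmin0 hwmin0) hg)]
      have : T * (dmin * wmin * g) = dmin * (g * (wmin * T)) := by ring
      rw [this]
      calc dmin * (g * (wmin * T)) ≤ dmin * (V / dmin) :=
            mul_le_mul_of_nonneg_left h7 hdmin0.le
        _ = V := by field_simp
    calc (Bᵀ.mulVec x e) ^ 2 ≤ T := by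
          rw [hT]
          exact Finset.single_le_sum (f := fun e => (Bᵀ.mulVec x e) ^ 2)
            (fun e _ => sq_nonneg _) (Finset.mem_univ e)
      _ ≤ V / (dmin * wmin) / g := h8
  -- squeeze
  refine squeeze_zero_norm' (a := fun g => Real.sqrt (V / (dmin * wmin) / g)) ?_ ?_
  · filter_upwards [eventually_gt_atTop (0 : ℝ)] with g hg
    rw [pi_norm_le_iff_of_nonneg (Real.sqrt_nonneg _)]
    intro e
    rw [Real.norm_eq_abs, ← Real.sqrt_sq_eq_abs]
    exact Real.sqrt_le_sqrt (key g hg e)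
  · have h1 : Tendsto (fun g : ℝ => V / (dmin * wmin) / g) atTop (nhds 0) :=
      Tendsto.div_atTop tendsto_const_nhds tendsto_id
    have h2 := (Real.continuous_sqrt.tendsto' 0 0 Real.sqrt_zero).comp h1
    exact h2
end

section
/- Let $\Delta \succ 0$ be diagonal and $L$ a graph Laplacian (symmetric PSD with $L\mathbb{1} = 0$). Then $\lim_{\mathfrak{g} \to \infty} \mathbb{1}^{\mathsf{T}} \Delta (\Delta + \mathfrak{g} L)^{-1} = \mathbb{1}^{\mathsf{T}}$, i.e., for every vector $v$, $\lim_{\mathfrak{g}\to\infty} \mathbb{1}^{\mathsf{T}} \Delta (\Delta + \mathfrak{g}L)^{-1} v = \mathbb{1}^{\mathsf{T}} v$. -/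
open Matrix Filter

theorem stmt9 {n : ℕ}
    (L : Matrix (Fin n) (Fin n) ℝ) (hL : L.PosSemidef)
    (hL1 : L.mulVec (fun _ => 1) = 0)
    (hker : ∀ x : Fin n → ℝ, L.mulVec x = 0 ↔ ∃ c : ℝ, x = fun _ => c)
    (d : Fin n → ℝ) (hd : ∀ i, 0 < d i) (v : Fin n → ℝ) :
    Tendsto (fun g : ℝ =>
        dotProduct (fun _ => (1 : ℝ))
          ((Matrix.diagonal d).mulVec ((Matrix.diagonal d + g • L)⁻¹.mulVec v)))
      atTop (nhds (dotProduct (fun _ => (1 : ℝ)) v)) := by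
  have hD : (Matrix.diagonal d).PosDef := Matrix.posDef_diagonal_iff.mpr hd
  apply Tendsto.congr' _ tendsto_const_nhds
  filter_upwards [eventually_ge_atTop (0 : ℝ)] with g hg
  set M := Matrix.diagonal d + g • L with hM
  have hgL : (g • L).PosSemidef := by
    refine ⟨?_, fun x => ?_⟩
    · unfold Matrix.IsHermitian
      rw [conjTranspose_smul, hL.1]
      simp
    · have h := mul_nonneg hg (hL.2 x)
      simp only [Finsupp.mul_sum, Matrix.smul_apply, smul_eq_mul] at h ⊢
      refine le_of_le_of_eq h ?_
      congr 1; ext i xi; congr 1; ext j xj; ring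
  have hMpd : M.PosDef := hD.add_posSemidef hgL
  have hdet : IsUnit M.det := hMpd.det_pos.ne'.isUnit
  -- 1ᵀ (g•L) = 0
  have hvL : (fun _ => (1:ℝ)) ᵥ* M = (fun _ => (1:ℝ)) ᵥ* Matrix.diagonal d := by
    rw [hM, vecMul_add]
    have : (fun _ => (1:ℝ)) ᵥ* (g • L) = 0 := by
      rw [← mulVec_transpose, transpose_smul,
        show Lᵀ = L by exact (by simpa using hL.1 : L.IsSymm), smul_mulVec, hL1, smul_zero]
    rw [this, add_zero]
  calc dotProduct (fun _ => (1:ℝ)) v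
      = dotProduct (fun _ => (1:ℝ)) (M.mulVec (M⁻¹.mulVec v)) := by
        rw [mulVec_mulVec, Matrix.mul_nonsing_inv M hdet, one_mulVec]
    _ = dotProduct (fun _ => (1:ℝ))
          ((Matrix.diagonal d).mulVec (M⁻¹.mulVec v)) := by
        rw [dotProduct_mulVec, dotProduct_mulVec, dotProduct_mulVec, dotProduct_mulVec, hvL]
end

section
/- Let $P(v) = v \cdot i(v)$ where $i(v)$ implicitly satisfies the single-diode PV equation $i = i_L - i_0(\exp((v + R_s i)/(v_t \alpha)) - 1) - (v + R_s i)/R_p$ with $i_L, i_0 \geq 0$, $v_t, \alpha, R_s, R_p > 0$. Then $i(v)$ is well-defined (the defining equation has a unique solution $i$ for each $v \geq 0$) and $i$ is strictly decreasing in $v$. -/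
theorem stmt12 (iL i0 vt α Rs Rp : ℝ)
    (hiL : 0 ≤ iL) (hi0 : 0 ≤ i0) (hvt : 0 < vt) (hα : 0 < α)
    (hRs : 0 < Rs) (hRp : 0 < Rp) :
    (∀ v : ℝ, 0 ≤ v → ∃! i : ℝ,
      i = iL - i0 * (Real.exp ((v + Rs * i) / (vt * α)) - 1) - (v + Rs * i) / Rp) ∧
    ∀ f : ℝ → ℝ,
      (∀ v : ℝ, 0 ≤ v →
        f v = iL - i0 * (Real.exp ((v + Rs * f v) / (vt * α)) - 1) - (v + Rs * f v) / Rp) →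
      StrictAntiOn f (Set.Ici 0) := by
  have hcpos : 0 < vt * α := mul_pos hvt hα
  set F : ℝ → ℝ := fun x => iL - i0 * (Real.exp (x / (vt * α)) - 1) - x / Rp with hFdef
  have hanti : ∀ x y : ℝ, x < y → F y < F x := by
    intro x y hxy
    have h1 : Real.exp (x / (vt * α)) ≤ Real.exp (y / (vt * α)) :=
      Real.exp_le_exp.2 (by gcongr)
    have h2 : x / Rp < y / Rp := by gcongr
    have h3 : 0 ≤ i0 * (Real.exp (y / (vt * α)) - Real.exp (x / (vt * α))) :=
      mul_nonneg hi0 (by linarith)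
    simp only [hFdef]
    nlinarith
  constructor
  · intro v hv
    set G : ℝ → ℝ := fun i => F (v + Rs * i) - i with hGdef
    have hGcont : Continuous G := by
      simp only [hGdef, hFdef]
      continuity
    have hvRs : 0 ≤ v / Rs := div_nonneg hv hRs.le
    have hab : -(v / Rs) ≤ iL := by linarith
    have hGa : 0 ≤ G (-(v / Rs)) := by
      have hx : v + Rs * (-(v / Rs)) = 0 := by field_simp; ring
      simp only [hGdef, hFdef, hx]
      simp [Real.exp_zero]
      linarith
    have hGb : G iL ≤ 0 := by
      have ht : 0 ≤ (v + Rs * iL) / (vt * α) := by positivity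
      have he : 1 ≤ Real.exp ((v + Rs * iL) / (vt * α)) := Real.one_le_exp ht
      have h3 : 0 ≤ i0 * (Real.exp ((v + Rs * iL) / (vt * α)) - 1) :=
        mul_nonneg hi0 (by linarith)
      have h4 : 0 ≤ (v + Rs * iL) / Rp := by positivity
      simp only [hGdef, hFdef]
      linarith
    obtain ⟨i, _, hi⟩ := intermediate_value_Icc' hab hGcont.continuousOn
      (Set.mem_Icc.2 ⟨hGb, hGa⟩)
    refine ⟨i, ?_, ?_⟩
    · have : F (v + Rs * i) - i = 0 := hi
      simp only [hFdef] at this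
      linarith
    · intro j hj
      have hi' : i = F (v + Rs * i) := by
        have : F (v + Rs * i) - i = 0 := hi
        linarith
      have hj' : j = F (v + Rs * j) := by simp only [hFdef]; linarith [hj]
      rcases lt_trichotomy j i with h | h | h
      · exfalso
        have : F (v + Rs * i) < F (v + Rs * j) := hanti _ _ (by nlinarith)
        rw [← hi', ← hj'] at this; linarith
      · exact h
      · exfalso
        have : F (v + Rs * j) < F (v + Rs * i) := hanti _ _ (by nlinarith)
        rw [← hi', ← hj'] at this; linarith
  · intro f hf v1 hv1 v2 hv2 h12
    by_contra h
    push_neg at h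
    have h1 : f v1 = F (v1 + Rs * f v1) := by
      simp only [hFdef]; exact hf v1 hv1
    have h2 : f v2 = F (v2 + Rs * f v2) := by
      simp only [hFdef]; exact hf v2 hv2
    have hx : v1 + Rs * f v1 < v2 + Rs * f v2 := by nlinarith
    have := hanti _ _ hx
    rw [← h1, ← h2] at this
    linarith
end

section
/- Consider the scalar closed-loop dynamics of a single VSC with curtailed dc source feeding directly into its dc link: $c\,\dot{v} = P - P_{ac}$, $T\dot{P} = -P - k_g v$, with $c, T, k_g > 0$, where the ac power satisfies $P_{ac} = b\,\theta$ (linearized power flow to an infinite bus at angle 0, $b > 0$) and the dual-port GFM control gives $\dot{\theta} = k_p \dot{v} + k_\omega v$ with $k_p, k_\omega > 0$. Then the origin of the resulting third-order linear system in $(\theta, v, P)$ is asymptotically stable. -/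
open Matrix

theorem stmt13 (c T kg b kp kω : ℝ)
    (hc : 0 < c) (hT : 0 < T) (hkg : 0 < kg) (hb : 0 < b)
    (hkp : 0 < kp) (hkω : 0 < kω) :
    ∀ μ ∈ spectrum ℂ
      ((!![-kp * b / c, kω, kp / c;
           -b / c, 0, 1 / c;
           0, -kg / T, -1 / T] : Matrix (Fin 3) (Fin 3) ℝ).map Complex.ofReal),
      μ.re < 0 := by
  intro μ hμ
  rw [spectrum.mem_iff] at hμ
  rw [Matrix.isUnit_iff_isUnit_det, isUnit_iff_ne_zero, not_not] at hμ
  rw [Matrix.det_fin_three] at hμ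
  simp [Matrix.algebraMap_matrix_apply, Matrix.map_apply] at hμ
  obtain ⟨a2, a1, a0, ha2, ha1, ha0, hRH, hP⟩ :
      ∃ a2 a1 a0 : ℝ, 0 < a2 ∧ 0 < a1 ∧ 0 < a0 ∧ a0 < a2 * a1 ∧
        μ ^ 3 + (a2 : ℂ) * μ ^ 2 + (a1 : ℂ) * μ + (a0 : ℂ) = 0 := by
    refine ⟨kp * b / c + 1 / T, b * kω / c + kp * b / (c * T) + kg / (c * T),
      b * kω / (c * T), by positivity, by positivity, by positivity, ?_, ?_⟩
    · have h1 : 0 < kp * b / c * (b * kω / c + kp * b / (c * T) + kg / (c * T)) := by positivity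
      have h2 : 0 < 1 / T * (kp * b / (c * T) + kg / (c * T)) := by positivity
      have key : (kp * b / c + 1 / T) * (b * kω / c + kp * b / (c * T) + kg / (c * T))
          - b * kω / (c * T) =
          kp * b / c * (b * kω / c + kp * b / (c * T) + kg / (c * T)) +
            1 / T * (kp * b / (c * T) + kg / (c * T)) := by ring
      linarith
    · push_cast
      linear_combination hμ
  clear hμ
  have hRe := congrArg Complex.re hP
  have hIm := congrArg Complex.im hP
  simp only [pow_succ, pow_zero, one_mul, Complex.add_re, Complex.add_im, Complex.mul_re,
    Complex.mul_im, Complex.ofReal_re, Complex.ofReal_im, Complex.zero_re, Complex.zero_im,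
    zero_mul, mul_zero, zero_add, sub_zero, zero_sub, add_zero] at hRe hIm
  set x : ℝ := μ.re
  set y : ℝ := μ.im
  have hRe' : x ^ 3 - 3 * x * y ^ 2 + a2 * (x ^ 2 - y ^ 2) + a1 * x + a0 = 0 := by
    nlinarith [hRe, sq_nonneg x]
  have hIm' : y * (3 * x ^ 2 - y ^ 2 + 2 * a2 * x + a1) = 0 := by
    nlinarith [hIm, sq_nonneg y]
  by_contra hxneg
  push_neg at hxneg
  rcases eq_or_ne y 0 with hy0 | hy0
  · rw [hy0] at hRe'
    nlinarith [mul_nonneg (mul_nonneg hxneg hxneg) hxneg, mul_nonneg hxneg hxneg,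
      mul_nonneg ha2.le (mul_nonneg hxneg hxneg), mul_nonneg ha1.le hxneg]
  · have hy2 : y ^ 2 = 3 * x ^ 2 + 2 * a2 * x + a1 := by
      rcases mul_eq_zero.mp hIm' with h | h
      · exact absurd h hy0
      · linarith
    rw [hy2] at hRe'
    nlinarith [mul_nonneg (mul_nonneg hxneg hxneg) hxneg, mul_nonneg hxneg hxneg,
      mul_nonneg (mul_nonneg ha2.le hxneg) hxneg,
      mul_nonneg ha1.le hxneg, mul_nonneg (mul_nonneg ha2.le ha2.le) hxneg]
end

section
/- Consider the two-node point-to-point HVDC model: two dc capacitor dynamics $c_1\dot{v}_1 = -P_{ac,1} - g(v_1 - v_2)$, $c_2\dot{v}_2 = -P_{ac,2} - g(v_2 - v_1)$ with $c_1, c_2, g > 0$, dual-port GFM controls $\dot{\theta}_i = k_{p,i}\dot{v}_i + k_{\omega,i} v_i$, and linearized ac powers $P_{ac,i} = b_i \theta_i$ ($b_i > 0$, each ac side an infinite bus). If $k_{p,i}/k_{\omega,i} < 2 c_i / g$ for $i = 1, 2$ and all gains are positive, then the origin of the resulting four-state linear system in $(\theta_1, \theta_2, v_1, v_2)$ is asymptotically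 stable. -/
open Matrix

theorem stmt19 (c1 c2 g b1 b2 kp1 kp2 kω1 kω2 : ℝ)
    (hc1 : 0 < c1) (hc2 : 0 < c2) (hg : 0 < g)
    (hb1 : 0 < b1) (hb2 : 0 < b2)
    (hkp1 : 0 < kp1) (hkp2 : 0 < kp2) (hkω1 : 0 < kω1) (hkω2 : 0 < kω2)
    (hcond1 : kp1 / kω1 < 2 * c1 / g) (hcond2 : kp2 / kω2 < 2 * c2 / g) :
    ∀ μ ∈ spectrum ℂ
      ((!![-kp1 * b1 / c1, 0, kω1 - kp1 * g / c1, kp1 * g / c1;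
           0, -kp2 * b2 / c2, kp2 * g / c2, kω2 - kp2 * g / c2;
           -b1 / c1, 0, -g / c1, g / c1;
           0, -b2 / c2, g / c2, -g / c2] : Matrix (Fin 4) (Fin 4) ℝ).map
        Complex.ofReal),
      μ.re < 0 := by
  intro μ hμ
  rw [← AlgEquiv.spectrum_eq (Matrix.toLinAlgEquiv' (n := Fin 4) (R := ℂ)),
    ← Module.End.hasEigenvalue_iff_mem_spectrum] at hμ
  obtain ⟨x, hx⟩ := hμ.exists_hasEigenvector
  have hxne : x ≠ 0 := hx.right
  have hxeq := hx.apply_eq_smul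
  clear hx hμ
  have eq0 := congrFun hxeq 0
  have eq1 := congrFun hxeq 1
  have eq2 := congrFun hxeq 2
  have eq3 := congrFun hxeq 3
  clear hxeq
  simp [Matrix.toLinAlgEquiv'_apply, Matrix.mulVec, dotProduct,
    Fin.sum_univ_four] at eq0 eq1 eq2 eq3
  have hc1' : (c1 : ℂ) ≠ 0 := Complex.ofReal_ne_zero.mpr hc1.ne'
  have hc2' : (c2 : ℂ) ≠ 0 := Complex.ofReal_ne_zero.mpr hc2.ne'
  set t1 := x 0 with ht1
  set t2 := x 1 with ht2
  set w1 := x 2 with hw1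
  set w2 := x 3 with hw2
  -- scalar eigen-equations
  have E1 : μ * (t1 - kp1 * w1) = kω1 * w1 := by
    linear_combination (kp1 : ℂ) * eq2 - eq0
  have E2 : μ * (t2 - kp2 * w2) = kω2 * w2 := by
    linear_combination (kp2 : ℂ) * eq3 - eq1
  have E3 : (c1 : ℂ) * (μ * w1) = -b1 * t1 - g * w1 + g * w2 := by
    rw [← eq2]; field_simp; ring
  have E4 : (c2 : ℂ) * (μ * w2) = -b2 * t2 - g * w2 + g * w1 := by
    rw [← eq3]; field_simp; ring
  clear eq0 eq1 eq2 eq3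
  -- conjugated equations
  have E1c := congrArg (starRingEnd ℂ) E1
  have E2c := congrArg (starRingEnd ℂ) E2
  have E3c := congrArg (starRingEnd ℂ) E3
  have E4c := congrArg (starRingEnd ℂ) E4
  simp only [_root_.map_mul, _root_.map_add, map_sub, map_neg,
    Complex.conj_ofReal] at E1c E2c E3c E4c
  -- casts of norm squares as products with conjugates
  have p1 : ((Complex.normSq (t1 - kp1 * w1) : ℝ) : ℂ)
      = (t1 - kp1 * w1) * ((starRingEnd ℂ) t1 - kp1 * (starRingEnd ℂ) w1) := by
    rw [← Complex.mul_conj]; simp [map_sub, _root_.map_mul, Complex.conj_ofReal]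
  have p2 : ((Complex.normSq (t2 - kp2 * w2) : ℝ) : ℂ)
      = (t2 - kp2 * w2) * ((starRingEnd ℂ) t2 - kp2 * (starRingEnd ℂ) w2) := by
    rw [← Complex.mul_conj]; simp [map_sub, _root_.map_mul, Complex.conj_ofReal]
  have p3 : ((Complex.normSq w1 : ℝ) : ℂ) = w1 * (starRingEnd ℂ) w1 := by
    rw [← Complex.mul_conj]
  have p4 : ((Complex.normSq w2 : ℝ) : ℂ) = w2 * (starRingEnd ℂ) w2 := by
    rw [← Complex.mul_conj]
  have p5 : ((Complex.normSq (w1 - w2) : ℝ) : ℂ)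
      = (w1 - w2) * ((starRingEnd ℂ) w1 - (starRingEnd ℂ) w2) := by
    rw [← Complex.mul_conj]; simp [map_sub]
  -- Lyapunov identity (complex form)
  have KEY : ((2 * μ.re : ℝ) : ℂ) *
      ((b1 * kω2 * Complex.normSq (t1 - kp1 * w1) + b2 * kω1 * Complex.normSq (t2 - kp2 * w2)
        + kω1 * kω2 * (c1 * Complex.normSq w1 + c2 * Complex.normSq w2) : ℝ) : ℂ)
      = ((-2 * (kω1 * kω2) * (b1 * kp1 * Complex.normSq w1 + b2 * kp2 * Complex.normSq w2
        + g * Complex.normSq (w1 - w2)) : ℝ) : ℂ) := by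
    rw [← Complex.add_conj]
    push_cast [p1, p2, p3, p4, p5]
    linear_combination ((b1 : ℂ) * kω2 * ((starRingEnd ℂ) t1 - kp1 * (starRingEnd ℂ) w1)) * E1
      + ((b1 : ℂ) * kω2 * (t1 - kp1 * w1)) * E1c
      + ((b2 : ℂ) * kω1 * ((starRingEnd ℂ) t2 - kp2 * (starRingEnd ℂ) w2)) * E2
      + ((b2 : ℂ) * kω1 * (t2 - kp2 * w2)) * E2c
      + ((kω1 : ℂ) * kω2 * (starRingEnd ℂ) w1) * E3
      + ((kω1 : ℂ) * kω2 * w1) * E3c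
      + ((kω1 : ℂ) * kω2 * (starRingEnd ℂ) w2) * E4
      + ((kω1 : ℂ) * kω2 * w2) * E4c
  have KEY2 : (2 * μ.re) *
      (b1 * kω2 * Complex.normSq (t1 - kp1 * w1) + b2 * kω1 * Complex.normSq (t2 - kp2 * w2)
        + kω1 * kω2 * (c1 * Complex.normSq w1 + c2 * Complex.normSq w2))
      = -2 * (kω1 * kω2) * (b1 * kp1 * Complex.normSq w1 + b2 * kp2 * Complex.normSq w2
        + g * Complex.normSq (w1 - w2)) := by
    exact_mod_cast KEY
  -- not both w1, w2 vanish
  have hnz : ¬ (w1 = 0 ∧ w2 = 0) := by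
    rintro ⟨h1, h2⟩
    have hb1' : (b1 : ℂ) ≠ 0 := Complex.ofReal_ne_zero.mpr hb1.ne'
    have hb2' : (b2 : ℂ) ≠ 0 := Complex.ofReal_ne_zero.mpr hb2.ne'
    have ht1z : t1 = 0 := by
      have h := E3; rw [h1, h2] at h
      have : (b1 : ℂ) * t1 = 0 := by linear_combination h
      exact ((mul_eq_zero.mp this).resolve_left hb1')
    have ht2z : t2 = 0 := by
      have h := E4; rw [h1, h2] at h
      have : (b2 : ℂ) * t2 = 0 := by linear_combination h
      exact ((mul_eq_zero.mp this).resolve_left hb2')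
    apply hxne
    funext i
    fin_cases i
    · exact ht1z
    · exact ht2z
    · exact h1
    · exact h2
  have hD : 0 < b1 * kp1 * Complex.normSq w1 + b2 * kp2 * Complex.normSq w2
      + g * Complex.normSq (w1 - w2) := by
    rcases not_and_or.mp hnz with h | h
    · nlinarith [mul_pos (mul_pos hb1 hkp1) (Complex.normSq_pos.mpr h),
        Complex.normSq_nonneg w2, Complex.normSq_nonneg (w1 - w2),
        mul_nonneg (mul_pos hb2 hkp2).le (Complex.normSq_nonneg w2),
        mul_nonneg hg.le (Complex.normSq_nonneg (w1 - w2))]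
    · nlinarith [mul_pos (mul_pos hb2 hkp2) (Complex.normSq_pos.mpr h),
        Complex.normSq_nonneg w1, Complex.normSq_nonneg (w1 - w2),
        mul_nonneg (mul_pos hb1 hkp1).le (Complex.normSq_nonneg w1),
        mul_nonneg hg.le (Complex.normSq_nonneg (w1 - w2))]
  have hS : 0 < b1 * kω2 * Complex.normSq (t1 - kp1 * w1)
      + b2 * kω1 * Complex.normSq (t2 - kp2 * w2)
      + kω1 * kω2 * (c1 * Complex.normSq w1 + c2 * Complex.normSq w2) := by
    have hcw : 0 < c1 * Complex.normSq w1 + c2 * Complex.normSq w2 := by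
      rcases not_and_or.mp hnz with h | h
      · nlinarith [mul_pos hc1 (Complex.normSq_pos.mpr h),
          mul_nonneg hc2.le (Complex.normSq_nonneg w2)]
      · nlinarith [mul_pos hc2 (Complex.normSq_pos.mpr h),
          mul_nonneg hc1.le (Complex.normSq_nonneg w1)]
    linarith [mul_pos (mul_pos hkω1 hkω2) hcw,
      mul_nonneg (mul_pos hb1 hkω2).le (Complex.normSq_nonneg (t1 - kp1 * w1)),
      mul_nonneg (mul_pos hb2 hkω1).le (Complex.normSq_nonneg (t2 - kp2 * w2))]
  clear E1 E2 E3 E4 E1c E2c E3c E4c p1 p2 p3 p4 p5 KEY hnz hxne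
  by_contra hre
  push_neg at hre
  nlinarith [mul_nonneg hre hS.le, mul_pos (mul_pos hkω1 hkω2) hD]
end
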